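/- Let n ≥ 1 and let E ∈ M_n(ℂ) be the cyclic shift matrix with entries E_{ij} = 1 if i ≡ j + 1 (mod n) and E_{ij} = 0 otherwise. Let a_0, …, a_{n−1} ∈ ℂ with Σ_{i=0}^{n−1} a_i = 0, and let A ∈ M_n(ℂ) have entries A_{ij} = a_j if i ≡ j + 1 (mod n) and 0 otherwise. Then there exists X ∈ M_n(ℂ) with E·X − X·E = A; consequently the block matrix [[E, A], [0, E]] ∈ M_{2n}(ℂ) is similar (conjugate by an invertible matrix) to the block-diagonal matrix [[E, 0], [0, E]]. -/
import Mathlib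


open Matrix

/-- The `n × n` cyclic shift matrix: `E i j = 1` iff `i ≡ j + 1 (mod n)`. -/
def cyclicShift (n : ℕ) : Matrix (Fin n) (Fin n) ℂ :=
  fun i j => if ((i : ZMod n) = (j : ZMod n) + 1) then 1 else 0

/-- The weighted shift matrix: `A i j = a j` iff `i ≡ j + 1 (mod n)`. -/
def weightedShift (n : ℕ) (a : Fin n → ℂ) : Matrix (Fin n) (Fin n) ℂ :=
  fun i j => if ((i : ZMod n) = (j : ZMod n) + 1) then a j else 0

lemma shift_val (n : ℕ) (hn : 1 ≤ n) (i j : Fin n) (h : (i : ZMod n) = (j : ZMod n) + 1) :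
    i.val = (j.val + 1) % n := by
  haveI : NeZero n := ⟨by omega⟩
  have hv := congrArg ZMod.val h
  simp [ZMod.val_add, ZMod.val_natCast] at hv
  rcases Nat.eq_or_lt_of_le hn with h1 | h1
  · have := i.isLt; subst h1; omega
  · haveI := Fact.mk h1
    rw [ZMod.val_one, Nat.mod_eq_of_lt i.isLt] at hv
    exact hv

lemma sum_step (n : ℕ) (a : Fin n → ℂ) (j : Fin n) :
    (∑ k : Fin n, if k.val < j.val + 1 then a k else 0)
      = (∑ k : Fin n, if k.val < j.val then a k else 0) + a j := by
  have : ∀ k : Fin n, (if k.val < j.val + 1 then a k else 0)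
      = (if k.val < j.val then a k else 0) + (if k = j then a k else 0) := by
    intro k
    rcases lt_trichotomy k.val j.val with hk | hk | hk
    · have : k ≠ j := fun e => by simp [e] at hk
      simp [hk, this, Nat.lt_succ_of_lt hk]
    · have : k = j := Fin.ext hk
      simp [this]
    · have h1 : ¬ k.val < j.val := by omega
      have h2 : ¬ k.val < j.val + 1 := by omega
      have : k ≠ j := fun e => by simp [e] at hk
      simp [h1, h2, this]
  rw [Finset.sum_congr rfl fun k _ => this k, Finset.sum_add_distrib,
    Finset.sum_ite_eq' Finset.univ j a]
  simp

/-- **Splitting of self-extensions of induced modules, linear-algebra form.**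
Let `E` be the `n × n` cyclic shift matrix and `A` the weighted shift with weights
`a₀, …, a_{n−1}` summing to `0`.  Then `A` is a commutator `E·X − X·E`, and consequently
the block matrix `[[E, A], [0, E]]` is similar to `[[E, 0], [0, E]]`. -/
theorem stmt_15 (n : ℕ) (hn : 1 ≤ n) (a : Fin n → ℂ) (ha : ∑ i, a i = 0) :
    (∃ X : Matrix (Fin n) (Fin n) ℂ,
      cyclicShift n * X - X * cyclicShift n = weightedShift n a) ∧
    (∃ P : Matrix (Fin n ⊕ Fin n) (Fin n ⊕ Fin n) ℂ, IsUnit P ∧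
      Matrix.fromBlocks (cyclicShift n) (weightedShift n a) 0 (cyclicShift n) * P =
        P * Matrix.fromBlocks (cyclicShift n) 0 0 (cyclicShift n)) := by
  set d : Fin n → ℂ := fun j => -∑ k : Fin n, if k.val < j.val then a k else 0 with hd
  set X : Matrix (Fin n) (Fin n) ℂ := Matrix.diagonal d with hXdef
  have key : ∀ i j : Fin n, (i : ZMod n) = (j : ZMod n) + 1 → d j - d i = a j := by
    intro i j h
    have hij := shift_val n hn i j h
    rcases Nat.lt_or_ge (j.val + 1) n with hlt | hge
    · -- i.val = j.val + 1
      have hi : i.val = j.val + 1 := by rw [hij, Nat.mod_eq_of_lt hlt]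
      simp only [hd]
      rw [hi, sum_step n a j]; ring
    · -- j.val = n - 1, i.val = 0
      have hj : j.val + 1 = n := by have := j.isLt; omega
      have hi : i.val = 0 := by rw [hij, hj, Nat.mod_self]
      have hS : (∑ k : Fin n, if k.val < j.val + 1 then a k else 0) = 0 := by
        rw [← ha]
        exact Finset.sum_congr rfl fun k _ =>
          if_pos (by have := k.isLt; omega)
      have := sum_step n a j
      rw [hS] at this
      simp only [hd, hi]
      have h0 : (∑ k : Fin n, if k.val < 0 then a k else 0) = 0 := by simp
      rw [h0]
      linear_combination this
  have hX : cyclicShift n * X - X * cyclicShift n = weightedShift n a := by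
    ext i j
    rw [Matrix.sub_apply, hXdef, Matrix.mul_diagonal, Matrix.diagonal_mul]
    simp only [cyclicShift, weightedShift]
    split_ifs with h
    · rw [mul_one, one_mul]; exact key i j h
    · ring
  refine ⟨⟨X, hX⟩, Matrix.fromBlocks 1 (-X) 0 1, ?_, ?_⟩
  · exact ⟨⟨Matrix.fromBlocks 1 (-X) 0 1, Matrix.fromBlocks 1 X 0 1,
      by rw [Matrix.fromBlocks_multiply]; simp,
      by rw [Matrix.fromBlocks_multiply]; simp⟩, rfl⟩
  · rw [Matrix.fromBlocks_multiply, Matrix.fromBlocks_multiply]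
    have hA : weightedShift n a = cyclicShift n * X - X * cyclicShift n := hX.symm
    simp only [Matrix.mul_one, Matrix.one_mul, Matrix.mul_zero, Matrix.zero_mul,
      add_zero, zero_add, hA]
    have h2 : cyclicShift n * -X + (cyclicShift n * X - X * cyclicShift n)
        = -X * cyclicShift n := by noncomm_ring
    rw [h2]
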